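/- arXiv:2503.16358 — 3 statements merged into one kernel-verified Lean document; each statement's English description precedes it below -/
import Mathlib

section
/- Let $1 \le r < s$ and let $X_1, X_2$ be random elements of a normed space with laws having finite $s$-th moments of the norm. Set $\theta = \frac{1/r - 1/s}{1 - 1/s}$. Then $W_r(X_1,X_2) \le W_1(X_1,X_2)^{\theta}\,(W_s(X_1,0) + W_s(X_2,0))^{1-\theta}$, where $W_p$ denotes the Wasserstein-$p$ distance with respect to the norm distance and $0$ is the point mass at the origin. -/
open MeasureTheory
open scoped ENNReal

/-- The Wasserstein-`r` (extended) distance between two measures on a metric space,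
defined as an infimum over couplings. -/
noncomputable def wassersteinDist {S : Type*} [MeasurableSpace S] [PseudoMetricSpace S]
    (r : ℝ) (μ ν : Measure S) : ℝ≥0∞ :=
  ⨅ (σ : Measure (S × S)) (_ : σ.map Prod.fst = μ ∧ σ.map Prod.snd = ν),
    (∫⁻ p, ENNReal.ofReal (dist p.1 p.2 ^ r) ∂σ) ^ (1 / r)

section Aux

/-- `rpow` with a positive exponent commutes with infima in `ℝ≥0∞`. -/
private lemma aux_iInf_rpow {ι : Sort*} (f : ι → ℝ≥0∞) {θ : ℝ} (hθ : 0 < θ) :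
    (⨅ i, f i) ^ θ = ⨅ i, f i ^ θ := by
  refine le_antisymm (le_iInf fun i => ENNReal.rpow_le_rpow (iInf_le _ i) hθ.le) ?_
  have h1 : (⨅ i, f i ^ θ) ^ (1 / θ) ≤ ⨅ i, f i := by
    refine le_iInf fun i => ?_
    calc (⨅ j, f j ^ θ) ^ (1 / θ) ≤ (f i ^ θ) ^ (1 / θ) :=
          ENNReal.rpow_le_rpow (iInf_le _ i) (by positivity)
      _ = f i := by rw [← ENNReal.rpow_mul, mul_one_div_cancel hθ.ne', ENNReal.rpow_one]
  calc ⨅ i, f i ^ θ = ((⨅ i, f i ^ θ) ^ (1 / θ)) ^ θ := by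
        rw [← ENNReal.rpow_mul, one_div_mul_cancel hθ.ne', ENNReal.rpow_one]
    _ ≤ (⨅ i, f i) ^ θ := ENNReal.rpow_le_rpow h1 hθ.le

/-- Lyapunov/Hölder interpolation for lower Lebesgue integrals of arbitrary (not necessarily
measurable) `ℝ≥0∞`-valued functions. -/
private lemma aux_interp {α : Type*} [MeasurableSpace α] (σ : Measure α) (d : α → ℝ≥0∞)
    {r s : ℝ} (hr : 1 < r) (hrs : r < s) :
    ∫⁻ a, d a ^ r ∂σ ≤
      (∫⁻ a, d a ∂σ) ^ ((s - r) / (s - 1)) * (∫⁻ a, d a ^ s ∂σ) ^ ((r - 1) / (s - 1)) := by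
  have hs1 : (0:ℝ) < s - 1 := by linarith
  have hr0 : (0:ℝ) < r := by linarith
  set t : ℝ := (s - r) / (s - 1) with ht
  have ht0 : 0 < t := div_pos (by linarith) hs1
  have ht1 : t < 1 := (div_lt_one hs1).2 (by linarith)
  have h1t : 1 - t = (r - 1) / (s - 1) := by
    rw [ht, eq_div_iff hs1.ne', sub_mul, one_mul, div_mul_cancel₀ _ hs1.ne']; ring
  obtain ⟨g, hgm, hgle, hg⟩ := exists_measurable_le_lintegral_eq σ (fun a => d a ^ r)
  rw [hg]
  set f : α → ℝ≥0∞ := fun a => g a ^ (1 / r) with hf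
  have hfm : Measurable f := ENNReal.continuous_rpow_const.measurable.comp hgm
  have hfd : ∀ a, f a ≤ d a := by
    intro a
    have := ENNReal.rpow_le_rpow (hgle a) (by positivity : (0:ℝ) ≤ 1 / r)
    rwa [← ENNReal.rpow_mul, mul_one_div_cancel hr0.ne', ENNReal.rpow_one] at this
  set A : α → ℝ≥0∞ := fun a => f a ^ t with hA
  set B : α → ℝ≥0∞ := fun a => f a ^ (s * (1 - t)) with hB
  have hAm : Measurable A := ENNReal.continuous_rpow_const.measurable.comp hfm
  have hBm : Measurable B := ENNReal.continuous_rpow_const.measurable.comp hfm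
  have hconj : Real.HolderConjugate (1 / t) (1 / (1 - t)) := by
    refine ⟨?_, one_div_pos.2 ht0, one_div_pos.2 (by linarith)⟩
    rw [one_div, one_div, inv_inv, inv_inv, inv_one]; ring
  have hAB : ∀ a, (A * B) a = g a := by
    intro a
    have hsum : t + s * (1 - t) = r := by
      rw [h1t, ht]; field_simp; ring
    calc (A * B) a = f a ^ (t + s * (1 - t)) :=
          (ENNReal.rpow_add_of_nonneg _ _ ht0.le (by nlinarith)).symm
      _ = f a ^ r := by rw [hsum]
      _ = g a := by
          rw [hf, ← ENNReal.rpow_mul, one_div_mul_cancel hr0.ne', ENNReal.rpow_one]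
  calc ∫⁻ a, g a ∂σ = ∫⁻ a, (A * B) a ∂σ := lintegral_congr fun a => (hAB a).symm
    _ ≤ (∫⁻ a, A a ^ (1 / t) ∂σ) ^ (1 / (1 / t)) *
          (∫⁻ a, B a ^ (1 / (1 - t)) ∂σ) ^ (1 / (1 / (1 - t))) :=
        ENNReal.lintegral_mul_le_Lp_mul_Lq σ hconj hAm.aemeasurable hBm.aemeasurable
    _ = (∫⁻ a, f a ∂σ) ^ t * (∫⁻ a, f a ^ s ∂σ) ^ (1 - t) := by
        have e1 : ∀ a, A a ^ (1 / t) = f a := fun a => by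
          rw [hA, ← ENNReal.rpow_mul, mul_one_div_cancel ht0.ne', ENNReal.rpow_one]
        have e2 : ∀ a, B a ^ (1 / (1 - t)) = f a ^ s := fun a => by
          rw [hB, ← ENNReal.rpow_mul, mul_one_div, mul_div_assoc,
            div_self (sub_ne_zero.2 ht1.ne'), mul_one]
        rw [lintegral_congr e1, lintegral_congr e2, one_div_one_div, one_div_one_div]
    _ ≤ (∫⁻ a, d a ∂σ) ^ t * (∫⁻ a, d a ^ s ∂σ) ^ (1 - t) := by
        refine mul_le_mul' (ENNReal.rpow_le_rpow (lintegral_mono hfd) ht0.le)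
          (ENNReal.rpow_le_rpow (lintegral_mono fun a =>
            ENNReal.rpow_le_rpow (hfd a) (by linarith)) (by linarith))
    _ = (∫⁻ a, d a ∂σ) ^ ((s - r) / (s - 1)) * (∫⁻ a, d a ^ s ∂σ) ^ ((r - 1) / (s - 1)) := by
        rw [← h1t]

/-- The transport cost of any coupling of `μ` with `dirac 0` is the `s`-th moment of `μ`. -/
private lemma aux_cost_dirac {E : Type*} [NormedAddCommGroup E] [MeasurableSpace E] [BorelSpace E]
    (τ : Measure (E × E)) {μ : Measure E} {s : ℝ} (hs : 0 ≤ s)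
    (h1 : τ.map Prod.fst = μ) (h2 : τ.map Prod.snd = Measure.dirac 0) :
    ∫⁻ p, ENNReal.ofReal (dist p.1 p.2 ^ s) ∂τ = ∫⁻ x, ENNReal.ofReal ‖x‖ ^ s ∂μ := by
  have hms : MeasurableSet ({(0 : E)}ᶜ) := (measurableSet_singleton _).compl
  have hzero : ∀ᵐ p ∂τ, p.2 = (0 : E) := by
    refine ae_iff.2 ?_
    have heq : {p : E × E | ¬ p.2 = 0} = Prod.snd ⁻¹' {(0:E)}ᶜ := rfl
    rw [heq, ← Measure.map_apply measurable_snd hms, h2, Measure.dirac_apply' _ hms]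
    simp
  calc ∫⁻ p, ENNReal.ofReal (dist p.1 p.2 ^ s) ∂τ
      = ∫⁻ p, ENNReal.ofReal ‖p.1‖ ^ s ∂τ := by
        refine lintegral_congr_ae (hzero.mono fun p hp => ?_)
        show ENNReal.ofReal (dist p.1 p.2 ^ s) = ENNReal.ofReal ‖p.1‖ ^ s
        rw [hp, dist_zero_right, ENNReal.ofReal_rpow_of_nonneg (norm_nonneg _) hs]
    _ = ∫⁻ x, ENNReal.ofReal ‖x‖ ^ s ∂μ := by
        rw [← h1]
        have hfmeas : Measurable fun x : E => ENNReal.ofReal ‖x‖ ^ s :=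
          ENNReal.continuous_rpow_const.measurable.comp measurable_norm.ennreal_ofReal
        exact (lintegral_map hfmeas measurable_fst).symm

/-- The `s`-th moment bounds the Wasserstein-`s` distance to `dirac 0` from below. -/
private lemma aux_moment_le_wasserstein {E : Type*} [NormedAddCommGroup E] [MeasurableSpace E]
    [BorelSpace E] {μ : Measure E} {s : ℝ} (hs : 0 ≤ s) :
    (∫⁻ x, ENNReal.ofReal ‖x‖ ^ s ∂μ) ^ (1 / s) ≤ wassersteinDist s μ (Measure.dirac 0) := by
  refine le_iInf fun τ => le_iInf fun h => ?_
  rw [aux_cost_dirac τ hs h.1 h.2]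

/-- The Wasserstein-`s` distance to `dirac 0` is bounded by the `s`-th moment. -/
private lemma aux_wasserstein_le_moment {E : Type*} [NormedAddCommGroup E] [MeasurableSpace E]
    [BorelSpace E] {μ : Measure E} [IsProbabilityMeasure μ] {s : ℝ} (hs : 0 ≤ s) :
    wassersteinDist s μ (Measure.dirac 0) ≤ (∫⁻ x, ENNReal.ofReal ‖x‖ ^ s ∂μ) ^ (1 / s) := by
  have hc : (μ.prod (Measure.dirac (0:E))).map Prod.fst = μ ∧
      (μ.prod (Measure.dirac (0:E))).map Prod.snd = Measure.dirac 0 := by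
    constructor <;> simp [Measure.map_fst_prod, Measure.map_snd_prod, measure_univ]
  refine le_trans (iInf₂_le (μ.prod (Measure.dirac (0:E))) hc) ?_
  rw [aux_cost_dirac _ hs hc.1 hc.2]

end Aux

/-- Wasserstein interpolation: for `1 ≤ r < s` and random elements `X₁, X₂` of a normed
space with finite `s`-th moments, with `θ = (1/r - 1/s)/(1 - 1/s)`,
`W_r(X₁,X₂) ≤ W_1(X₁,X₂)^θ (W_s(X₁,0) + W_s(X₂,0))^{1-θ}`. -/
theorem stmt12 {E : Type*} [NormedAddCommGroup E] [MeasurableSpace E] [BorelSpace E]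
    {Ω : Type*} [MeasurableSpace Ω] (P : Measure Ω) [IsProbabilityMeasure P]
    (X₁ X₂ : Ω → E) (hX₁ : Measurable X₁) (hX₂ : Measurable X₂)
    (r s : ℝ) (hr : 1 ≤ r) (hrs : r < s)
    (hm₁ : ∫⁻ ω, ENNReal.ofReal (‖X₁ ω‖ ^ s) ∂P ≠ ⊤)
    (hm₂ : ∫⁻ ω, ENNReal.ofReal (‖X₂ ω‖ ^ s) ∂P ≠ ⊤) :
    wassersteinDist r (P.map X₁) (P.map X₂) ≤
      wassersteinDist 1 (P.map X₁) (P.map X₂) ^ ((1 / r - 1 / s) / (1 - 1 / s)) *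
        (wassersteinDist s (P.map X₁) (Measure.dirac 0) +
          wassersteinDist s (P.map X₂) (Measure.dirac 0)) ^
          (1 - (1 / r - 1 / s) / (1 - 1 / s)) := by
  have hs1 : (1:ℝ) < s := lt_of_le_of_lt hr hrs
  have hs0 : (0:ℝ) < s := by linarith
  have hr0 : (0:ℝ) < r := by linarith
  have hden : (0:ℝ) < 1 - 1 / s := by
    have : 1 / s < 1 := (div_lt_one hs0).2 hs1
    linarith
  set θ : ℝ := (1 / r - 1 / s) / (1 - 1 / s) with hθdef
  rcases eq_or_lt_of_le hr with hr1 | hr1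
  · -- r = 1 : the inequality is trivial
    subst hr1
    have hθ1 : θ = 1 := by
      rw [hθdef]; rw [div_eq_one_iff_eq hden.ne']; norm_num
    rw [hθ1, ENNReal.rpow_one, sub_self, ENNReal.rpow_zero, mul_one]
  -- main case `1 < r`
  set μ : Measure E := P.map X₁ with hμdef
  set ν : Measure E := P.map X₂ with hνdef
  have hμp : IsProbabilityMeasure μ := Measure.isProbabilityMeasure_map hX₁.aemeasurable
  have hνp : IsProbabilityMeasure ν := Measure.isProbabilityMeasure_map hX₂.aemeasurable
  have hθ0 : 0 < θ := by
    refine div_pos ?_ hden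
    have : 1 / s < 1 / r := one_div_lt_one_div_of_lt hr0 hrs
    linarith
  have hθ1 : θ ≤ 1 := by
    rw [hθdef, div_le_one hden]
    have : 1 / r ≤ 1 := (div_le_one hr0).2 hr
    linarith
  -- moments
  have hnormmeas : Measurable fun x : E => ENNReal.ofReal ‖x‖ ^ s :=
    ENNReal.continuous_rpow_const.measurable.comp measurable_norm.ennreal_ofReal
  have hmom₁ : ∫⁻ x, ENNReal.ofReal ‖x‖ ^ s ∂μ ≠ ⊤ := by
    rw [hμdef, lintegral_map hnormmeas hX₁]
    have e : ∫⁻ ω, ENNReal.ofReal ‖X₁ ω‖ ^ s ∂P = ∫⁻ ω, ENNReal.ofReal (‖X₁ ω‖ ^ s) ∂P :=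
      lintegral_congr fun ω => ENNReal.ofReal_rpow_of_nonneg (norm_nonneg (X₁ ω)) hs0.le
    exact e.trans_ne hm₁
  have hmom₂ : ∫⁻ x, ENNReal.ofReal ‖x‖ ^ s ∂ν ≠ ⊤ := by
    rw [hνdef, lintegral_map hnormmeas hX₂]
    have e : ∫⁻ ω, ENNReal.ofReal ‖X₂ ω‖ ^ s ∂P = ∫⁻ ω, ENNReal.ofReal (‖X₂ ω‖ ^ s) ∂P :=
      lintegral_congr fun ω => ENNReal.ofReal_rpow_of_nonneg (norm_nonneg (X₂ ω)) hs0.le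
    exact e.trans_ne hm₂
  set Ms : ℝ≥0∞ := wassersteinDist s μ (Measure.dirac 0) +
      wassersteinDist s ν (Measure.dirac 0) with hMs
  have hMs_ne_top : Ms ≠ ⊤ := by
    rw [hMs]
    have h₁ := (aux_wasserstein_le_moment (μ := μ) hs0.le).trans_lt
      (ENNReal.rpow_lt_top_of_nonneg (by positivity) hmom₁)
    have h₂ := (aux_wasserstein_le_moment (μ := ν) hs0.le).trans_lt
      (ENNReal.rpow_lt_top_of_nonneg (by positivity) hmom₂)
    exact (ENNReal.add_lt_top.2 ⟨h₁, h₂⟩).ne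
  set c : ℝ≥0∞ := Ms ^ (1 - θ) with hc
  have hc_ne_top : c ≠ ⊤ := ENNReal.rpow_ne_top_of_nonneg (by linarith) hMs_ne_top
  -- the per-coupling bound
  set A : Measure (E × E) → ℝ≥0∞ :=
    fun σ => ∫⁻ p, ENNReal.ofReal (dist p.1 p.2 ^ (1:ℝ)) ∂σ with hAdef
  have key : ∀ σ : Measure (E × E), σ.map Prod.fst = μ → σ.map Prod.snd = ν →
      (∫⁻ p, ENNReal.ofReal (dist p.1 p.2 ^ r) ∂σ) ^ (1 / r) ≤ A σ ^ θ * c := by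
    intro σ hσ1 hσ2
    set d : E × E → ℝ≥0∞ := fun p => ENNReal.ofReal (dist p.1 p.2) with hd
    have hA_eq : A σ = ∫⁻ p, d p ∂σ := by
      rw [hAdef]
      exact lintegral_congr fun p => by rw [Real.rpow_one]
    -- triangle inequality step
    have htri : (∫⁻ p, d p ^ s ∂σ) ^ (1 / s) ≤ Ms := by
      have e₁ : ∫⁻ p : E × E, ENNReal.ofReal ‖p.1‖ ^ s ∂σ =
          ∫⁻ x, ENNReal.ofReal ‖x‖ ^ s ∂μ := by
        rw [← hσ1]; exact (lintegral_map hnormmeas measurable_fst).symm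
      have e₂ : ∫⁻ p : E × E, ENNReal.ofReal ‖p.2‖ ^ s ∂σ =
          ∫⁻ x, ENNReal.ofReal ‖x‖ ^ s ∂ν := by
        rw [← hσ2]; exact (lintegral_map hnormmeas measurable_snd).symm
      have hm1 : Measurable fun p : E × E => ENNReal.ofReal ‖p.1‖ :=
        (measurable_norm.comp measurable_fst).ennreal_ofReal
      have hm2 : Measurable fun p : E × E => ENNReal.ofReal ‖p.2‖ :=
        (measurable_norm.comp measurable_snd).ennreal_ofReal
      have hle : ∀ p : E × E, d p ≤
          ((fun p : E × E => ENNReal.ofReal ‖p.1‖) + fun p : E × E => ENNReal.ofReal ‖p.2‖) p := by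
        intro p
        show ENNReal.ofReal (dist p.1 p.2) ≤ ENNReal.ofReal ‖p.1‖ + ENNReal.ofReal ‖p.2‖
        rw [dist_eq_norm, ← ENNReal.ofReal_add (norm_nonneg _) (norm_nonneg _)]
        exact ENNReal.ofReal_le_ofReal (norm_sub_le _ _)
      calc (∫⁻ p, d p ^ s ∂σ) ^ (1 / s)
          ≤ (∫⁻ p, ((fun p : E × E => ENNReal.ofReal ‖p.1‖) +
              fun p : E × E => ENNReal.ofReal ‖p.2‖) p ^ s ∂σ) ^ (1 / s) :=
            ENNReal.rpow_le_rpow (lintegral_mono fun p =>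
              ENNReal.rpow_le_rpow (hle p) hs0.le) (by positivity)
        _ ≤ (∫⁻ p, (fun p : E × E => ENNReal.ofReal ‖p.1‖) p ^ s ∂σ) ^ (1 / s) +
              (∫⁻ p, (fun p : E × E => ENNReal.ofReal ‖p.2‖) p ^ s ∂σ) ^ (1 / s) :=
            ENNReal.lintegral_Lp_add_le hm1.aemeasurable hm2.aemeasurable hs1.le
        _ = (∫⁻ p : E × E, ENNReal.ofReal ‖p.1‖ ^ s ∂σ) ^ (1 / s) +
              (∫⁻ p : E × E, ENNReal.ofReal ‖p.2‖ ^ s ∂σ) ^ (1 / s) := rfl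
        _ = (∫⁻ x, ENNReal.ofReal ‖x‖ ^ s ∂μ) ^ (1 / s) +
              (∫⁻ x, ENNReal.ofReal ‖x‖ ^ s ∂ν) ^ (1 / s) := by rw [e₁, e₂]
        _ ≤ Ms := by
            rw [hMs]
            exact add_le_add (aux_moment_le_wasserstein hs0.le)
              (aux_moment_le_wasserstein hs0.le)
    -- interpolation step
    have hinterp := aux_interp σ d hr1 hrs
    have step1 : (∫⁻ p, ENNReal.ofReal (dist p.1 p.2 ^ r) ∂σ) = ∫⁻ p, d p ^ r ∂σ :=
      lintegral_congr fun p => (ENNReal.ofReal_rpow_of_nonneg dist_nonneg hr0.le).symm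
    have hts : (0:ℝ) < s - 1 := by linarith
    have hθt : (s - r) / (s - 1) * (1 / r) = θ := by
      rw [hθdef]; field_simp
    have hexp : (r - 1) / (s - 1) * (1 / r) = 1 / s * (1 - θ) := by
      rw [hθdef]; field_simp; ring
    calc (∫⁻ p, ENNReal.ofReal (dist p.1 p.2 ^ r) ∂σ) ^ (1 / r)
        = (∫⁻ p, d p ^ r ∂σ) ^ (1 / r) := by rw [step1]
      _ ≤ ((∫⁻ p, d p ∂σ) ^ ((s - r) / (s - 1)) *
            (∫⁻ p, d p ^ s ∂σ) ^ ((r - 1) / (s - 1))) ^ (1 / r) :=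
          ENNReal.rpow_le_rpow hinterp (by positivity)
      _ = (∫⁻ p, d p ∂σ) ^ θ * ((∫⁻ p, d p ^ s ∂σ) ^ (1 / s)) ^ (1 - θ) := by
          rw [ENNReal.mul_rpow_of_nonneg _ _ (by positivity : (0:ℝ) ≤ 1 / r),
            ← ENNReal.rpow_mul, ← ENNReal.rpow_mul, hθt, hexp, ENNReal.rpow_mul]
      _ ≤ A σ ^ θ * c := by
          rw [hA_eq, hc]
          exact mul_le_mul' le_rfl (ENNReal.rpow_le_rpow htri (by linarith))
  -- pass to the infimum over couplings
  set K := {σ : Measure (E × E) // σ.map Prod.fst = μ ∧ σ.map Prod.snd = ν} with hK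
  have hKne : Nonempty K := by
    refine ⟨⟨P.map fun ω => (X₁ ω, X₂ ω), ?_, ?_⟩⟩
    · rw [Measure.map_map measurable_fst (hX₁.prodMk hX₂)]; rfl
    · rw [Measure.map_map measurable_snd (hX₁.prodMk hX₂)]; rfl
  have hW1 : wassersteinDist 1 μ ν = ⨅ k : K, A k.1 := by
    rw [wassersteinDist]
    simp only [hAdef, div_one, ENNReal.rpow_one]
    exact iInf_subtype'
  calc wassersteinDist r μ ν ≤ ⨅ k : K, A k.1 ^ θ * c :=
        le_iInf fun k => le_trans (iInf₂_le k.1 k.2) (key k.1 k.2.1 k.2.2)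
    _ = (⨅ k : K, A k.1 ^ θ) * c := (ENNReal.iInf_mul fun h => absurd h hc_ne_top).symm
    _ = (⨅ k : K, A k.1) ^ θ * c := by rw [aux_iInf_rpow _ hθ0]
    _ = wassersteinDist 1 μ ν ^ θ * c := by rw [hW1]
end

section
/- For any $r \in [1,\infty)$ and any two Borel probability measures $\mu,\nu$ on a complete separable metric space with finite $r$-th moments, the Prokhorov distance satisfies $\pi(\mu,\nu) \le W_r(\mu,\nu)^{r/(r+1)}$. -/
open MeasureTheory
open scoped ENNReal

lemma stmt13_key {S : Type*} [MeasurableSpace S] [MetricSpace S] [BorelSpace S]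
    [TopologicalSpace.SeparableSpace S]
    (r : ℝ) (hr : 1 ≤ r) (μ ν : Measure S)
    [IsProbabilityMeasure μ] [IsProbabilityMeasure ν]
    (σ : Measure (S × S)) (hσ : σ.map Prod.fst = μ ∧ σ.map Prod.snd = ν) :
    levyProkhorovEDist μ ν ≤
      (∫⁻ p, ENNReal.ofReal (dist p.1 p.2 ^ r) ∂σ) ^ (1 / (r + 1)) := by
  have hr0 : (0:ℝ) < r := lt_of_lt_of_le one_pos hr
  have hr1 : (0:ℝ) < r + 1 := by linarith
  set I : ℝ≥0∞ := ∫⁻ p, ENNReal.ofReal (dist p.1 p.2 ^ r) ∂σ with hI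
  by_cases hItop : I = ⊤
  · rw [hItop, ENNReal.top_rpow_of_pos (by positivity)]
    exact le_top
  apply levyProkhorovEDist_le_of_forall_le
  intro ε B hδε hεtop B_mble
  have hε0 : (0:ℝ≥0∞) < ε := lt_of_le_of_lt zero_le hδε
  set e : ℝ := ε.toReal with he
  have he0 : 0 < e := ENNReal.toReal_pos hε0.ne' hεtop.ne
  have hεe : ENNReal.ofReal e = ε := ENNReal.ofReal_toReal hεtop.ne
  -- Markov set
  set A : Set (S × S) := {p | ε ^ r ≤ ENNReal.ofReal (dist p.1 p.2 ^ r)} with hA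
  have : SecondCountableTopology S := UniformSpace.secondCountable_of_separable S
  have hfmeas : Measurable fun p : S × S => ENNReal.ofReal (dist p.1 p.2 ^ r) :=
    (ENNReal.continuous_ofReal.comp
      ((Real.continuous_rpow_const hr0.le).comp
        (continuous_fst.dist continuous_snd))).measurable
  -- I ≤ ε ^ (r+1)
  have hIε : I ≤ ε ^ (r + 1) := by
    have h1 : I ^ (1 / (r + 1)) ≤ ε := hδε.le
    calc I = (I ^ (1 / (r + 1))) ^ (r + 1) := by
          rw [← ENNReal.rpow_mul, one_div_mul_cancel hr1.ne', ENNReal.rpow_one]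
      _ ≤ ε ^ (r + 1) := ENNReal.rpow_le_rpow h1 hr1.le
  -- Markov inequality
  have hmarkov : σ A ≤ ε := by
    have h1 : ε ^ r * σ A ≤ I := by
      have := mul_meas_ge_le_lintegral₀ hfmeas.aemeasurable (μ := σ) (ε ^ r)
      exact this
    have h2 : ε ^ r * σ A ≤ ε ^ r * ε := by
      refine h1.trans (hIε.trans_eq ?_)
      rw [ENNReal.rpow_add r 1 hε0.ne' hεtop.ne, ENNReal.rpow_one]
    have hεr0 : ε ^ r ≠ 0 := (ENNReal.rpow_pos hε0 hεtop.ne).ne'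
    have hεrtop : ε ^ r ≠ ⊤ := ENNReal.rpow_ne_top_of_nonneg hr0.le hεtop.ne
    exact (ENNReal.mul_le_mul_iff_right hεr0 hεrtop).mp h2
  -- main bound
  have hsub : Prod.fst ⁻¹' B ⊆ (Prod.snd ⁻¹' Metric.thickening e B) ∪ A := by
    intro p hp
    by_cases hd : dist p.1 p.2 < e
    · left
      exact Metric.mem_thickening_iff.mpr ⟨p.1, hp, by rwa [dist_comm]⟩
    · right
      push_neg at hd
      have : e ^ r ≤ dist p.1 p.2 ^ r := Real.rpow_le_rpow he0.le hd hr0.le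
      have h3 : ENNReal.ofReal (e ^ r) ≤ ENNReal.ofReal (dist p.1 p.2 ^ r) :=
        ENNReal.ofReal_le_ofReal this
      rw [← ENNReal.ofReal_rpow_of_pos he0, hεe] at h3
      exact h3
  calc μ B = σ (Prod.fst ⁻¹' B) := by
        rw [← hσ.1, Measure.map_apply measurable_fst B_mble]
    _ ≤ σ ((Prod.snd ⁻¹' Metric.thickening e B) ∪ A) := measure_mono hsub
    _ ≤ σ (Prod.snd ⁻¹' Metric.thickening e B) + σ A := measure_union_le _ _
    _ ≤ ν (Metric.thickening e B) + ε := by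
        refine add_le_add (le_of_eq ?_) hmarkov
        rw [← hσ.2, Measure.map_apply measurable_snd
            Metric.isOpen_thickening.measurableSet]

/-- The Prokhorov distance is bounded by a power of the Wasserstein distance:
`π(μ,ν) ≤ W_r(μ,ν)^{r/(r+1)}` for Borel probability measures with finite `r`-th moments
on a complete separable metric space. -/
theorem stmt13 {S : Type*} [MeasurableSpace S] [MetricSpace S] [BorelSpace S]
    [CompleteSpace S] [TopologicalSpace.SeparableSpace S]
    (r : ℝ) (hr : 1 ≤ r) (μ ν : Measure S)
    [IsProbabilityMeasure μ] [IsProbabilityMeasure ν]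
    (x₀ : S)
    (hμ : ∫⁻ x, ENNReal.ofReal (dist x x₀ ^ r) ∂μ ≠ ⊤)
    (hν : ∫⁻ x, ENNReal.ofReal (dist x x₀ ^ r) ∂ν ≠ ⊤) :
    levyProkhorovEDist μ ν ≤ wassersteinDist r μ ν ^ (r / (r + 1)) := by
  have hr0 : (0:ℝ) < r := lt_of_lt_of_le one_pos hr
  have hr1 : (0:ℝ) < r + 1 := by linarith
  have hq : (0:ℝ) < (r + 1) / r := by positivity
  rw [← ENNReal.rpow_le_rpow_iff hq, ← ENNReal.rpow_mul,
    show r / (r + 1) * ((r + 1) / r) = 1 by field_simp, ENNReal.rpow_one,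
    wassersteinDist]
  refine le_iInf fun σ => le_iInf fun hσ => ?_
  calc levyProkhorovEDist μ ν ^ ((r + 1) / r)
      ≤ ((∫⁻ p, ENNReal.ofReal (dist p.1 p.2 ^ r) ∂σ) ^ (1 / (r + 1))) ^ ((r + 1) / r) :=
        ENNReal.rpow_le_rpow (stmt13_key r hr μ ν σ hσ) hq.le
    _ = (∫⁻ p, ENNReal.ofReal (dist p.1 p.2 ^ r) ∂σ) ^ (1 / r) := by
        rw [← ENNReal.rpow_mul]
        congr 1
        field_simp
end

section
/- Let $(X_i)_{i\ge 0}$ be a stationary sequence of mean-zero real random variables with $\|\sum_{i=a}^{a+n-1} X_i\|_s \le C n^{1/2}$ for all $n \ge 1$, $a \ge 0$, for some $s > 2$. Then there is a constant $C' > 0$ such that $\|\max_{1\le j\le n} |\sum_{i=0}^{j-1} X_i|\|_s \le C' n^{1/2}$ for all $n \ge 1$. -/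
open MeasureTheory
open scoped ENNReal NNReal

namespace Serfling16
variable {Ω : Type*} [MeasurableSpace Ω]
set_option linter.unusedSectionVars false

noncomputable def S (X : ℕ → Ω → ℝ) (a k : ℕ) (ω : Ω) : ℝ := ∑ i ∈ Finset.Ico a (a + k), X i ω

noncomputable def M (X : ℕ → Ω → ℝ) (a n : ℕ) (ω : Ω) : ℝ :=
  (insert 1 (Finset.Icc 1 n)).sup' (Finset.insert_nonempty _ _) fun j => |S X a j ω|

lemma abs_S_le_M (X : ℕ → Ω → ℝ) (a n : ℕ) {j : ℕ} (hj : j ∈ insert 1 (Finset.Icc 1 n))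
    (ω : Ω) : |S X a j ω| ≤ M X a n ω := Finset.le_sup' (fun j => |S X a j ω|) hj

lemma M_nonneg (X : ℕ → Ω → ℝ) (a n : ℕ) (ω : Ω) : 0 ≤ M X a n ω :=
  le_trans (abs_nonneg _) (abs_S_le_M X a n (Finset.mem_insert_self _ _) ω)

lemma M_mono (X : ℕ → Ω → ℝ) (a : ℕ) {n n' : ℕ} (h : n ≤ n') (ω : Ω) :
    M X a n ω ≤ M X a n' ω :=
  Finset.sup'_mono _ (Finset.insert_subset_insert _ (Finset.Icc_subset_Icc_right h)) _

lemma measurable_S (X : ℕ → Ω → ℝ) (hmeas : ∀ i, Measurable (X i)) (a k : ℕ) :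
    Measurable (S X a k) := by
  unfold S; exact Finset.measurable_sum _ fun i _ => hmeas i

lemma measurable_M (X : ℕ → Ω → ℝ) (hmeas : ∀ i, Measurable (X i)) (a n : ℕ) :
    Measurable (M X a n) := by
  have : M X a n = (insert 1 (Finset.Icc 1 n)).sup' (Finset.insert_nonempty _ _)
      (fun j ω => |S X a j ω|) := by
    funext ω; rw [Finset.sup'_apply]; rfl
  rw [this]
  exact Finset.measurable_sup' _ fun j _ => (measurable_S X hmeas a j).abs

lemma M_split (X : ℕ → Ω → ℝ) {m : ℕ} (hm : 1 ≤ m) (ω : Ω) :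
    M X 0 (2 * m) ω ≤ max (M X 0 m ω) (|S X 0 m ω| + M X m m ω) := by
  apply Finset.sup'_le
  intro j hj
  have hj2 : 1 ≤ j ∧ j ≤ 2 * m := by
    rcases Finset.mem_insert.1 hj with h | h
    · subst h; omega
    · rcases Finset.mem_Icc.1 h with ⟨h1, h2⟩; exact ⟨h1, h2⟩
  by_cases hjm : j ≤ m
  · exact le_max_of_le_left (abs_S_le_M X 0 m
      (Finset.mem_insert_of_mem (Finset.mem_Icc.2 ⟨hj2.1, hjm⟩)) ω)
  · have hsplit : S X 0 j ω = S X 0 m ω + S X m (j - m) ω := by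
      unfold S
      rw [Nat.zero_add, Nat.zero_add, show m + (j - m) = j by omega]
      exact (Finset.sum_Ico_consecutive _ (Nat.zero_le m) (by omega)).symm
    rw [hsplit]
    refine le_max_of_le_right ?_
    exact le_trans (abs_add_le _ _) (add_le_add_right (abs_S_le_M X m m
      (Finset.mem_insert_of_mem (Finset.mem_Icc.2 ⟨by omega, by omega⟩)) ω) _)


lemma eLpNorm_M_stat (X : ℕ → Ω → ℝ) (hmeas : ∀ i, Measurable (X i))
    (P : Measure Ω)
    (hstat : ∀ m n : ℕ,
      P.map (fun ω => fun i : Fin n => X (m + i) ω) = P.map (fun ω => fun i : Fin n => X i ω))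
    (p : ENNReal) (a : ℕ) {n : ℕ} (hn : 1 ≤ n) :
    eLpNorm (M X a n) p P = eLpNorm (M X 0 n) p P := by
  classical
  set F : (Fin n → ℝ) → ℝ := fun v => (insert 1 (Finset.Icc 1 n)).sup'
    (Finset.insert_nonempty _ _) fun j => |∑ i : Fin n, if (i : ℕ) < j then v i else 0| with hF
  have hFmeas : Measurable F := by
    have : F = (insert 1 (Finset.Icc 1 n)).sup' (Finset.insert_nonempty _ _)
        (fun j v => |∑ i : Fin n, if (i : ℕ) < j then v i else 0|) := by
      funext v; rw [Finset.sup'_apply]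
    rw [this]
    refine Finset.measurable_sup' _ fun j _ => Measurable.abs ?_
    refine Finset.measurable_sum _ fun i _ => ?_
    by_cases h : (i : ℕ) < j
    · simpa [h] using measurable_pi_apply i
    · simpa [h] using measurable_const
  have key : ∀ b : ℕ, (F ∘ fun ω => fun i : Fin n => X (b + i) ω) = M X b n := by
    intro b; funext ω
    simp only [Function.comp_apply, hF, M]
    refine Finset.sup'_congr _ rfl fun j hj => ?_
    have hjn : j ≤ n := by
      rcases Finset.mem_insert.1 hj with h | h
      · omega
      · exact (Finset.mem_Icc.1 h).2
    congr 1
    rw [Fin.sum_univ_eq_sum_range (fun i => if i < j then X (b + i) ω else 0) n]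
    have h1 : ∑ i ∈ Finset.range n, (if i < j then X (b + i) ω else 0)
        = ∑ i ∈ Finset.range j, (if i < j then X (b + i) ω else 0) :=
      (Finset.sum_subset (Finset.range_subset_range.2 hjn)
        (fun i _ hi => if_neg (by simpa [Finset.mem_range] using hi))).symm
    have h2 : ∑ i ∈ Finset.range j, (if i < j then X (b + i) ω else 0)
        = ∑ i ∈ Finset.range j, X (b + i) ω :=
      Finset.sum_congr rfl fun i hi => if_pos (Finset.mem_range.1 hi)
    rw [h1, h2, S, Finset.sum_Ico_eq_sum_range]
    simp
  have hY : ∀ b : ℕ, Measurable (fun ω => fun i : Fin n => X (b + i) ω) := fun b =>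
    measurable_pi_lambda _ fun i => hmeas (b + i)
  calc eLpNorm (M X a n) p P = eLpNorm (F ∘ fun ω => fun i : Fin n => X (a + i) ω) p P := by
        rw [key a]
    _ = eLpNorm F p (P.map (fun ω => fun i : Fin n => X (a + i) ω)) :=
        (eLpNorm_map_measure hFmeas.aestronglyMeasurable (hY a).aemeasurable).symm
    _ = eLpNorm F p (P.map (fun ω => fun i : Fin n => X i ω)) := by rw [hstat a n]
    _ = eLpNorm (F ∘ fun ω => fun i : Fin n => X i ω) p P := by
        have h0 : (fun ω => fun i : Fin n => X i ω)
            = (fun ω => fun i : Fin n => X (0 + i) ω) := by simp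
        rw [h0, eLpNorm_map_measure hFmeas.aestronglyMeasurable (hY 0).aemeasurable]
    _ = eLpNorm (M X 0 n) p P := by
        have h0 : (fun ω => fun i : Fin n => X i ω)
            = (fun ω => fun i : Fin n => X (0 + i) ω) := by simp
        rw [h0, key 0]


lemma eLpNorm_rpow_eq (P : Measure Ω) {s : ℝ} (hs : 0 < s) (f : Ω → ℝ) :
    eLpNorm f (ENNReal.ofReal s) P ^ s = ∫⁻ ω, (‖f ω‖₊ : ℝ≥0∞) ^ s ∂P := by
  rw [eLpNorm_eq_lintegral_rpow_enorm_toReal (by simp [ENNReal.ofReal_eq_zero]; linarith)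
      ENNReal.ofReal_ne_top,
    ENNReal.toReal_ofReal hs.le, ← ENNReal.rpow_mul, one_div_mul_cancel hs.ne',
    ENNReal.rpow_one]
  rfl

lemma eLpNorm_max_rpow (P : Measure Ω) {s : ℝ} (hs : 0 < s) {f g : Ω → ℝ}
    (hf : Measurable f) (hg : Measurable g) :
    eLpNorm (fun ω => max (f ω) (g ω)) (ENNReal.ofReal s) P ^ s ≤
      eLpNorm f (ENNReal.ofReal s) P ^ s + eLpNorm g (ENNReal.ofReal s) P ^ s := by
  rw [eLpNorm_rpow_eq P hs, eLpNorm_rpow_eq P hs, eLpNorm_rpow_eq P hs]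
  have hmg : Measurable fun ω => (‖g ω‖₊ : ℝ≥0∞) ^ s :=
    ENNReal.continuous_rpow_const.measurable.comp hg.nnnorm.coe_nnreal_ennreal
  calc ∫⁻ ω, (‖max (f ω) (g ω)‖₊ : ℝ≥0∞) ^ s ∂P
      ≤ ∫⁻ ω, ((‖f ω‖₊ : ℝ≥0∞) ^ s + (‖g ω‖₊ : ℝ≥0∞) ^ s) ∂P := by
        refine lintegral_mono fun ω => ?_
        rcases max_cases (f ω) (g ω) with ⟨h1, _⟩ | ⟨h1, _⟩ <;> rw [h1]
        · exact le_self_add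
        · exact le_add_self
    _ = _ := lintegral_add_right _ hmg

end Serfling16

open Serfling16 in
/-- Serfling-type maximal inequality: if `(X_i)` is stationary, mean zero, and
`‖∑_{i=a}^{a+n-1} X_i‖_s ≤ C n^{1/2}` uniformly for some `s > 2`, then
`‖max_{1≤j≤n} |∑_{i=0}^{j-1} X_i|‖_s ≤ C' n^{1/2}`. -/
theorem stmt16 {Ω : Type*} [MeasurableSpace Ω] (P : Measure Ω) [IsProbabilityMeasure P]
    (X : ℕ → Ω → ℝ) (s : ℝ) (hs : 2 < s)
    (hmeas : ∀ i, Measurable (X i))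
    (hstat : ∀ m n : ℕ,
      P.map (fun ω => fun i : Fin n => X (m + i) ω) = P.map (fun ω => fun i : Fin n => X i ω))
    (hmean : ∀ i, ∫ ω, X i ω ∂P = 0)
    (C : ℝ) (hC : 0 < C)
    (hsum : ∀ (a : ℕ) (n : ℕ), 1 ≤ n →
      eLpNorm (fun ω => ∑ i ∈ Finset.Ico a (a + n), X i ω) (ENNReal.ofReal s) P ≤
        ENNReal.ofReal (C * Real.sqrt n)) :
    ∃ C' > (0 : ℝ), ∀ n : ℕ, ∀ hn : 1 ≤ n,
      eLpNorm (fun ω => (Finset.Icc 1 n).sup' (Finset.nonempty_Icc.2 hn)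
          fun j => |∑ i ∈ Finset.range j, X i ω|) (ENNReal.ofReal s) P ≤
        ENNReal.ofReal (C' * Real.sqrt n) := by
  classical
  have hs0 : (0 : ℝ) < s := by linarith
  set p := ENNReal.ofReal s with hp
  have hp1 : 1 ≤ p := ENNReal.one_le_ofReal.2 (by linarith)
  set ρ : ℝ := ((2 : ℝ) ^ (s / 2) - 1) ^ (1 / s) with hρ
  have h2s : (2 : ℝ) < 2 ^ (s / 2) := by
    nth_rewrite 1 [show (2 : ℝ) = 2 ^ (1 : ℝ) by rw [Real.rpow_one]]
    exact (Real.rpow_lt_rpow_left_iff one_lt_two).2 (by linarith)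
  have hA1 : (1 : ℝ) < 2 ^ (s / 2) - 1 := by linarith
  have hρ1 : 1 < ρ :=
    (Real.one_lt_rpow_iff_of_pos (by linarith)).2 (Or.inl ⟨hA1, by positivity⟩)
  have hρs : ρ ^ s = 2 ^ (s / 2) - 1 := by
    rw [hρ, ← Real.rpow_mul (by linarith), one_div_mul_cancel hs0.ne', Real.rpow_one]
  have hρ2 : ρ ≤ 2 := by
    have h1 : ρ ^ s ≤ 2 ^ s := by
      rw [hρs]
      have h2 : (2 : ℝ) ^ (s / 2) ≤ 2 ^ s :=
        (Real.rpow_le_rpow_left_iff one_lt_two).2 (by linarith)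
      linarith
    by_contra h
    push_neg at h
    have := Real.rpow_lt_rpow (by norm_num) h hs0
    linarith
  set K := C / (ρ - 1) with hK
  have hρ1' : (0 : ℝ) < ρ - 1 := by linarith
  have hK0 : 0 < K := div_pos hC hρ1'
  have hCK : C + K = ρ * K := by
    have h := div_mul_cancel₀ C hρ1'.ne'; rw [← hK] at h; linear_combination -h
  have hCleK : C ≤ K := by rw [hK, le_div_iff₀ hρ1']; nlinarith
  have main : ∀ k : ℕ, eLpNorm (M X 0 (2 ^ k)) p P ≤
      ENNReal.ofReal (K * Real.sqrt ((2 ^ k : ℕ) : ℝ)) := by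
    intro k
    induction k with
    | zero =>
      have hM1 : M X 0 (2 ^ 0) = fun ω => |S X 0 1 ω| := by
        funext ω
        simp [M, Finset.Icc_self]
      rw [hM1]
      have h1 : eLpNorm (fun ω => |S X 0 1 ω|) p P = eLpNorm (S X 0 1) p P := by
        simp_rw [← Real.norm_eq_abs]; exact eLpNorm_norm _
      rw [h1, show S X 0 1 = fun ω => ∑ i ∈ Finset.Ico 0 (0 + 1), X i ω from rfl]
      refine le_trans (hsum 0 1 le_rfl) (ENNReal.ofReal_le_ofReal ?_)
      simpa using hCleK
    | succ k ih =>
      set m := 2 ^ k with hm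
      have hm1 : 1 ≤ m := Nat.one_le_two_pow
      have e1 : eLpNorm (M X 0 (2 ^ (k + 1))) p P ≤
          eLpNorm (fun ω => max (M X 0 m ω) (|S X 0 m ω| + M X m m ω)) p P := by
        refine eLpNorm_mono_real fun ω => ?_
        rw [Real.norm_eq_abs, abs_of_nonneg (M_nonneg X 0 _ ω)]
        rw [show 2 ^ (k + 1) = 2 * m by rw [hm]; ring]
        exact M_split X hm1 ω
      have hMm : Measurable (M X 0 m) := measurable_M X hmeas 0 m
      have hMm' : Measurable (M X m m) := measurable_M X hmeas m m
      have hSm : Measurable (S X 0 m) := measurable_S X hmeas 0 m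
      have e3 : eLpNorm (fun ω => |S X 0 m ω| + M X m m ω) p P ≤
          ENNReal.ofReal ((C + K) * Real.sqrt (m : ℝ)) := by
        have t1 : eLpNorm (fun ω => |S X 0 m ω|) p P ≤
            ENNReal.ofReal (C * Real.sqrt (m : ℝ)) := by
          have h1 : eLpNorm (fun ω => |S X 0 m ω|) p P = eLpNorm (S X 0 m) p P := by
            simp_rw [← Real.norm_eq_abs]; exact eLpNorm_norm _
          rw [h1, show S X 0 m = fun ω => ∑ i ∈ Finset.Ico 0 (0 + m), X i ω from rfl]
          exact hsum 0 m hm1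
        have t2 : eLpNorm (M X m m) p P ≤ ENNReal.ofReal (K * Real.sqrt (m : ℝ)) := by
          rw [eLpNorm_M_stat X hmeas P hstat p m hm1]
          exact ih
        calc eLpNorm (fun ω => |S X 0 m ω| + M X m m ω) p P
            ≤ eLpNorm (fun ω => |S X 0 m ω|) p P + eLpNorm (M X m m) p P :=
              eLpNorm_add_le hSm.abs.aestronglyMeasurable hMm'.aestronglyMeasurable hp1
          _ ≤ ENNReal.ofReal (C * Real.sqrt (m : ℝ)) + ENNReal.ofReal (K * Real.sqrt (m : ℝ)) :=
              add_le_add t1 t2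
          _ = ENNReal.ofReal ((C + K) * Real.sqrt (m : ℝ)) := by
              rw [← ENNReal.ofReal_add (by positivity) (by positivity)]; ring_nf
      have real_eq : (K * Real.sqrt (m : ℝ)) ^ s + ((C + K) * Real.sqrt (m : ℝ)) ^ s
          = (K * Real.sqrt (((2 ^ (k + 1) : ℕ) : ℝ))) ^ s := by
        have hm2 : (((2 ^ (k + 1) : ℕ)) : ℝ) = 2 * (m : ℝ) := by
          rw [hm]; push_cast; ring
        rw [hCK, hm2, Real.sqrt_mul (by norm_num : (0 : ℝ) ≤ 2)]
        set t := Real.sqrt (m : ℝ) with htdef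
        have ht : 0 ≤ t := Real.sqrt_nonneg _
        have hs2 : Real.sqrt 2 ^ s = 2 ^ (s / 2) := by
          rw [show Real.sqrt 2 = (2 : ℝ) ^ (1 / 2 : ℝ) from Real.sqrt_eq_rpow 2,
            ← Real.rpow_mul (by norm_num)]
          congr 1; ring
        rw [Real.mul_rpow hK0.le ht, Real.mul_rpow (by positivity) ht,
          Real.mul_rpow (by linarith : (0 : ℝ) ≤ ρ) hK0.le,
          Real.mul_rpow hK0.le (by positivity : (0 : ℝ) ≤ Real.sqrt 2 * t),
          Real.mul_rpow (Real.sqrt_nonneg 2) ht, hρs, hs2]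
        ring
      have e5 : eLpNorm (M X 0 (2 ^ (k + 1))) p P ^ s ≤
          ENNReal.ofReal (K * Real.sqrt (((2 ^ (k + 1) : ℕ) : ℝ))) ^ s := by
        calc eLpNorm (M X 0 (2 ^ (k + 1))) p P ^ s
            ≤ eLpNorm (fun ω => max (M X 0 m ω) (|S X 0 m ω| + M X m m ω)) p P ^ s :=
              ENNReal.rpow_le_rpow e1 hs0.le
          _ ≤ eLpNorm (M X 0 m) p P ^ s
              + eLpNorm (fun ω => |S X 0 m ω| + M X m m ω) p P ^ s :=
              eLpNorm_max_rpow P hs0 hMm (hSm.abs.add hMm')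
          _ ≤ ENNReal.ofReal (K * Real.sqrt (m : ℝ)) ^ s
              + ENNReal.ofReal ((C + K) * Real.sqrt (m : ℝ)) ^ s :=
              add_le_add (ENNReal.rpow_le_rpow ih hs0.le) (ENNReal.rpow_le_rpow e3 hs0.le)
          _ = ENNReal.ofReal ((K * Real.sqrt (m : ℝ)) ^ s)
              + ENNReal.ofReal (((C + K) * Real.sqrt (m : ℝ)) ^ s) := by
              rw [ENNReal.ofReal_rpow_of_nonneg (by positivity) hs0.le,
                ENNReal.ofReal_rpow_of_nonneg (by positivity) hs0.le]
          _ = ENNReal.ofReal ((K * Real.sqrt (m : ℝ)) ^ s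
              + ((C + K) * Real.sqrt (m : ℝ)) ^ s) :=
              (ENNReal.ofReal_add (by positivity) (by positivity)).symm
          _ = ENNReal.ofReal ((K * Real.sqrt (((2 ^ (k + 1) : ℕ) : ℝ))) ^ s) := by
              rw [real_eq]
          _ = ENNReal.ofReal (K * Real.sqrt (((2 ^ (k + 1) : ℕ) : ℝ))) ^ s := by
              rw [ENNReal.ofReal_rpow_of_nonneg (by positivity) hs0.le]
      have h6 := ENNReal.rpow_le_rpow e5 (by positivity : (0 : ℝ) ≤ 1 / s)
      rwa [← ENNReal.rpow_mul, ← ENNReal.rpow_mul, mul_one_div_cancel hs0.ne',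
        ENNReal.rpow_one, ENNReal.rpow_one] at h6
  refine ⟨Real.sqrt 2 * K, by positivity, fun n hn => ?_⟩
  set k := Nat.clog 2 n with hk
  have hnk : n ≤ 2 ^ k := Nat.le_pow_clog one_lt_two n
  have hk2n : (2 : ℕ) ^ k ≤ 2 * n := by
    rcases eq_or_lt_of_le hn with h | h
    · rw [hk, ← h, Nat.clog_one_right]; omega
    · have h1 : 2 ^ (k - 1) < n := Nat.pow_pred_clog_lt_self one_lt_two h
      have hkne : k ≠ 0 := by
        rintro h0
        rw [h0] at hnk
        omega
      have h2 : (2 : ℕ) ^ k = 2 * 2 ^ (k - 1) := by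
        conv_lhs => rw [show k = (k - 1) + 1 by omega]
        rw [pow_succ]; ring
      omega
  have htf : (fun ω => (Finset.Icc 1 n).sup' (Finset.nonempty_Icc.2 hn)
      fun j => |∑ i ∈ Finset.range j, X i ω|) = M X 0 n := by
    funext ω
    refine ((Finset.sup'_congr _
      (Finset.insert_eq_self.2 (Finset.mem_Icc.2 ⟨le_rfl, hn⟩)) fun j hj => ?_)).symm
    congr 1
    rw [S, Nat.zero_add, Finset.range_eq_Ico]
  rw [htf]
  calc eLpNorm (M X 0 n) p P ≤ eLpNorm (M X 0 (2 ^ k)) p P := by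
        refine eLpNorm_mono_real fun ω => ?_
        rw [Real.norm_eq_abs, abs_of_nonneg (M_nonneg X 0 n ω)]
        exact M_mono X 0 hnk ω
    _ ≤ ENNReal.ofReal (K * Real.sqrt ((2 ^ k : ℕ) : ℝ)) := main k
    _ ≤ ENNReal.ofReal (Real.sqrt 2 * K * Real.sqrt n) := by
        refine ENNReal.ofReal_le_ofReal ?_
        have h1 : Real.sqrt ((2 ^ k : ℕ) : ℝ) ≤ Real.sqrt (2 * (n : ℝ)) := by
          refine Real.sqrt_le_sqrt ?_
          exact_mod_cast hk2n
        have h2 : Real.sqrt (2 * (n : ℝ)) = Real.sqrt 2 * Real.sqrt n :=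
          Real.sqrt_mul (by norm_num) _
        nlinarith [Real.sqrt_nonneg ((2 ^ k : ℕ) : ℝ)]
end
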